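/- Let m be even and t ≥ 1. For any two distinct strings s, v ∈ S_R^(t)(m) with the same sequence (σ_1,…,σ_{m/2}), there is no multiset D that is simultaneously the result of at most t asymmetric composition errors in C(s) and the result of at most t asymmetric composition errors in C(v). In particular, given its correct sequence (σ_1,…,σ_{m/2}), any s ∈ S_R^(t)(m) is uniquely determined by a version of C(s) corrupted by at most t asymmetric composition errors. -/

import Mathlib

/-- The composition of a binary string: the pair (number of 0s, number of 1s).
Here `false` represents the bit 0 and `true` the bit 1. -/
def comp (w : List Bool) : ℕ × ℕ := (w.count false, w.count true)

/-- The multiset of compositions of all contiguous substrings of `s` of length `l`. -/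
def compLen (l : ℕ) (s : List Bool) : Multiset (ℕ × ℕ) :=
  ↑((List.range (s.length + 1 - l)).map fun i => comp ((s.drop i).take l))

/-- The composition multiset `C(s)`: compositions of all contiguous substrings of `s`. -/
def compMS (s : List Bool) : Multiset (ℕ × ℕ) :=
  ↑((List.range s.length).flatMap fun i =>
    (List.range (s.length - i)).map fun j => comp ((s.drop i).take (j + 1)))

/-- A single composition error: one element `(z,w)` of `M` is replaced by a
pair `(z',w')` with the same length `z'+w' = z+w`. -/
def OneErr (M M' : Multiset (ℕ × ℕ)) : Prop :=
  ∃ z w z' w' : ℕ, (z, w) ∈ M ∧ z + w = z' + w' ∧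
    M' = M - {(z, w)} + {(z', w')}

/-- `AtMostErr t M D`: `D` is obtained from `M` by at most `t` composition errors. -/
def AtMostErr : ℕ → Multiset (ℕ × ℕ) → Multiset (ℕ × ℕ) → Prop
  | 0, M, D => M = D
  | t + 1, M, D => M = D ∨ ∃ M', OneErr M M' ∧ AtMostErr t M' D

/-- The sub-multiset of elements (compositions) of length `l`. -/
def lenPart (l : ℕ) (M : Multiset (ℕ × ℕ)) : Multiset (ℕ × ℕ) :=
  M.filter fun p => p.1 + p.2 = l

/-- `D` is the result of at most `t` *asymmetric* composition errors in `C(s)`,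
for a string of length `n`: additionally, for each `1 ≤ i ≤ ⌊n/2⌋`, at most one
of the two sub-multisets of lengths `i` and `n+1-i` is altered. -/
def AsymErr (t n : ℕ) (s : List Bool) (D : Multiset (ℕ × ℕ)) : Prop :=
  AtMostErr t (compMS s) D ∧
  ∀ i, 1 ≤ i → i ≤ n / 2 →
    lenPart i D ≠ compLen i s → lenPart (n + 1 - i) D = compLen (n + 1 - i) s

/-- A Catalan-Bertrand string: every nonempty prefix has strictly more 0s than 1s. -/
def IsCB (w : List Bool) : Prop :=
  ∀ j, 1 ≤ j → j ≤ w.length → (w.take j).count true < (w.take j).count false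

/-- The reconstruction code `S_R(n)` for even `n`: `s_1 = 0`, `s_n = 1`, and the
subsequence of `s` indexed by the positions `i ∈ {1,…,n/2}` with `s_i ≠ s_{n+1-i}`
(in increasing order) is a Catalan-Bertrand string (indices here are 0-based). -/
def SReven (n : ℕ) : Set (List Bool) :=
  { s | s.length = n ∧ s.getD 0 false = false ∧ s.getD (n - 1) false = true ∧
    IsCB (((List.range (n / 2)).filter fun i =>
        s.getD i false != s.getD (n - 1 - i) false).map fun i => s.getD i false) }

/-- The reconstruction code `S_R(n)`: for odd `n`, obtained from `S_R(n-1)` by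
inserting an arbitrary middle bit. -/
def SR (n : ℕ) : Set (List Bool) :=
  if Even n then SReven n
  else { s | ∃ v ∈ SReven (n - 1), ∃ b : Bool,
      s = v.take ((n - 1) / 2) ++ [b] ++ v.drop ((n - 1) / 2) }

/-- The cumulative weight `w_l(s)`: total number of 1s over all length-`l`
contiguous substrings of `s`. -/
def cumW (l : ℕ) (s : List Bool) : ℕ :=
  ∑ i ∈ Finset.range (s.length + 1 - l), ((s.drop i).take l).count true

/-- `σ_i(s) = s_i + s_{n+1-i}` for `1 ≤ i ≤ ⌊n/2⌋`, and `σ_{⌈n/2⌉}(s) = s_{⌈n/2⌉}`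
for odd `n` (1-based indexing in the mathematical description). -/
def sigmaSeq (s : List Bool) (i : ℕ) : ℕ :=
  if 2 * i ≤ s.length then
    (if s.getD (i - 1) false then 1 else 0) +
      (if s.getD (s.length - i) false then 1 else 0)
  else (if s.getD (i - 1) false then 1 else 0)

/-- The `t`-shifted reconstruction code `S_R^(t)(m)` for even `m`: `s_1 = ⋯ = s_t = 0`,
`s_{m−t+1} = ⋯ = s_m = 1`, and, letting `I = {i ∈ {t+1,…,m−t} : s_i ≠ s_{m+1−i}}`, the
subsequence of `s` indexed by the positions of `I` lying in `{1,…,m/2}` (in increasing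
order) is a Catalan-Bertrand string (indices here are 0-based). -/
def SRt (t m : ℕ) : Set (List Bool) :=
  { s | s.length = m ∧
    (∀ i < t, s.getD i false = false) ∧
    (∀ i < t, s.getD (m - 1 - i) false = true) ∧
    IsCB (((List.range (m / 2)).filter fun i =>
        decide (t ≤ i) && decide (i < m - t) &&
          (s.getD i false != s.getD (m - 1 - i) false)).map
      fun i => s.getD i false) }



-- triangle
lemma sub_tri {α : Type*} [DecidableEq α] (X Y Z : Multiset α) :
    X - Z ≤ (X - Y) + (Y - Z) := by
  rw [Multiset.le_iff_count]
  intro a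
  simp only [Multiset.count_sub, Multiset.count_add]
  omega

lemma card_sub_tri {α : Type*} [DecidableEq α] (X Y Z : Multiset α) :
    Multiset.card (X - Z) ≤ Multiset.card (X - Y) + Multiset.card (Y - Z) := by
  have := Multiset.card_le_card (sub_tri X Y Z)
  simpa using this

lemma oneErr_sub_le {M M' : Multiset (ℕ × ℕ)} (h : OneErr M M') :
    Multiset.card (M - M') ≤ 1 ∧ Multiset.card (M' - M) ≤ 1 := by
  obtain ⟨z, w, z', w', -, -, rfl⟩ := h
  constructor
  · have h1 : M - (M - {(z, w)} + {(z', w')}) ≤ ({(z, w)} : Multiset (ℕ × ℕ)) := by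
      rw [Multiset.le_iff_count]
      intro a
      simp only [Multiset.count_sub, Multiset.count_add, Multiset.count_singleton]
      by_cases h1 : a = (z, w) <;> by_cases h2 : a = (z', w') <;> simp [h1, h2] <;> omega
    simpa using Multiset.card_le_card h1
  · have h1 : (M - {(z, w)} + {(z', w')}) - M ≤ ({(z', w')} : Multiset (ℕ × ℕ)) := by
      rw [Multiset.le_iff_count]
      intro a
      simp only [Multiset.count_sub, Multiset.count_add, Multiset.count_singleton]
      by_cases h1 : a = (z, w) <;> by_cases h2 : a = (z', w') <;> simp [h1, h2] <;> omega
    simpa using Multiset.card_le_card h1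

lemma atMostErr_sub_le : ∀ (t : ℕ) (M D : Multiset (ℕ × ℕ)), AtMostErr t M D →
    Multiset.card (M - D) ≤ t ∧ Multiset.card (D - M) ≤ t := by
  intro t
  induction t with
  | zero => intro M D h; cases h; simp
  | succ n ih =>
    intro M D h
    rcases h with rfl | ⟨M', h1, h2⟩
    · simp
    · obtain ⟨ha, hb⟩ := oneErr_sub_le h1
      obtain ⟨hc, hd⟩ := ih M' D h2
      constructor
      · calc Multiset.card (M - D) ≤ _ := card_sub_tri M M' D
          _ ≤ n + 1 := by omega
      · calc Multiset.card (D - M) ≤ _ := card_sub_tri D M' M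
          _ ≤ n + 1 := by omega

lemma main_upper {t : ℕ} {Ms Mv D : Multiset (ℕ × ℕ)}
    (h1 : AtMostErr t Ms D) (h2 : AtMostErr t Mv D) :
    Multiset.card (Ms - Mv) ≤ 2 * t := by
  obtain ⟨a, -⟩ := atMostErr_sub_le t Ms D h1
  obtain ⟨-, b⟩ := atMostErr_sub_le t Mv D h2
  calc Multiset.card (Ms - Mv) ≤ _ := card_sub_tri Ms D Mv
    _ ≤ 2 * t := by omega

-- filter commutes with sub
lemma filter_sub {α : Type*} [DecidableEq α] (p : α → Prop) [DecidablePred p]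
    (X Y : Multiset α) : (X - Y).filter p = X.filter p - Y.filter p := by
  ext a
  by_cases h : p a <;> simp [Multiset.count_sub, Multiset.count_filter, h]

-- sum over distinct lengths of filtered cards ≤ card
lemma sum_filter_card_le {α : Type*} (f : α → ℕ) (X : Multiset α) (L : Finset ℕ) :
    (∑ l ∈ L, Multiset.card (X.filter (fun q => f q = l))) ≤ Multiset.card X := by
  classical
  induction L using Finset.induction generalizing X with
  | empty => simp
  | @insert a L ha ih =>
    rw [Finset.sum_insert ha]
    have key : ∀ l ∈ L, X.filter (fun q => f q = l)
        = (X.filter (fun q => ¬ f q = a)).filter (fun q => f q = l) := by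
      intro l hl
      rw [Multiset.filter_filter]
      apply Multiset.filter_congr
      intro x hx
      constructor
      · intro h
        refine ⟨h, ?_⟩
        intro hfa
        rw [h] at hfa
        subst hfa
        exact ha hl
      · intro h; exact h.1
    rw [Finset.sum_congr rfl (fun l hl => by rw [key l hl])]
    have h2 := ih (X.filter (fun q => ¬ f q = a))
    have h3 : Multiset.card (X.filter (fun q => f q = a)) +
        Multiset.card (X.filter (fun q => ¬ f q = a)) = Multiset.card X := by
      rw [← Multiset.card_add, Multiset.filter_add_not]
    omega

-- the "≥ 2" lemma
lemma two_le_card_sub {l : ℕ} {X Y : Multiset (ℕ × ℕ)}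
    (hcard : Multiset.card X = Multiset.card Y)
    (hsum : (X.map Prod.snd).sum = (Y.map Prod.snd).sum)
    (hX : ∀ q ∈ X, q.1 + q.2 = l) (hY : ∀ q ∈ Y, q.1 + q.2 = l)
    (hne : X ≠ Y) : 2 ≤ Multiset.card (X - Y) := by
  by_contra hlt
  push_neg at hlt
  interval_cases h : Multiset.card (X - Y)
  · have : X - Y = 0 := Multiset.card_eq_zero.mp h
    have hle : X ≤ Y := by rwa [tsub_eq_zero_iff_le] at this
    exact hne (Multiset.eq_of_le_of_card_le hle (le_of_eq hcard.symm))
  · obtain ⟨q, hq⟩ := Multiset.card_eq_one.mp h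
    -- X = (X ∩ Y) + (X - Y), Y = (X ∩ Y) + (Y - X)
    have hXdec : X ∩ Y + (X - Y) = X := by
      ext a
      simp only [Multiset.count_add, Multiset.count_inter, Multiset.count_sub]
      omega
    have hYdec : X ∩ Y + (Y - X) = Y := by
      ext a
      simp only [Multiset.count_add, Multiset.count_inter, Multiset.count_sub]
      omega
    have hcard2 : Multiset.card (Y - X) = 1 := by
      have c1 := congrArg Multiset.card hXdec
      have c2 := congrArg Multiset.card hYdec
      simp only [Multiset.card_add] at c1 c2
      omega
    obtain ⟨q', hq'⟩ := Multiset.card_eq_one.mp hcard2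
    have hsnd : q.2 = q'.2 := by
      have e1 := congrArg (fun Z => (Multiset.map Prod.snd Z).sum) hXdec
      have e2 := congrArg (fun Z => (Multiset.map Prod.snd Z).sum) hYdec
      simp only [Multiset.map_add, Multiset.sum_add, hq, hq'] at e1 e2
      simp only [Multiset.map_singleton, Multiset.sum_singleton] at e1 e2
      omega
    have hqX : q ∈ X := by
      have : q ∈ X - Y := by rw [hq]; simp
      exact Multiset.mem_of_le (Multiset.sub_le_self _ _) this
    have hqY : q' ∈ Y := by
      have : q' ∈ Y - X := by rw [hq']; simp
      exact Multiset.mem_of_le (Multiset.sub_le_self _ _) this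
    have : q = q' := by
      have h1 := hX q hqX
      have h2 := hY q' hqY
      have : q.1 = q'.1 := by omega
      exact Prod.ext this hsnd
    subst this
    rw [hq] at hXdec
    rw [hq'] at hYdec
    exact hne (hXdec.symm.trans hYdec)


lemma count_false_add_count_true (w : List Bool) :
    w.count false + w.count true = w.length := by
  induction w with
  | nil => simp
  | cons b l ih => cases b <;> simp [List.count_cons] <;> omega

lemma comp_len (w : List Bool) : (comp w).1 + (comp w).2 = w.length :=
  count_false_add_count_true w

-- coe of flatMap over range as Finset.sum
lemma coe_flatMap_range {α : Type*} (n : ℕ) (f : ℕ → List α) :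
    (↑((List.range n).flatMap f) : Multiset α) = ∑ i ∈ Finset.range n, (↑(f i) : Multiset α) := by
  induction n with
  | zero => simp
  | succ n ih =>
    rw [List.range_succ, List.flatMap_append, Finset.sum_range_succ, ← ih]
    simp

lemma coe_map_range {α : Type*} (n : ℕ) (g : ℕ → α) :
    (↑((List.range n).map g) : Multiset α) = ∑ i ∈ Finset.range n, ({g i} : Multiset α) := by
  induction n with
  | zero => simp
  | succ n ih =>
    rw [List.range_succ, List.map_append, Finset.sum_range_succ, ← ih]
    rw [← Multiset.coe_add]
    rfl

lemma filter_sum_multiset {α : Type*} (p : α → Prop) [DecidablePred p]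
    (n : ℕ) (M : ℕ → Multiset α) :
    (∑ i ∈ Finset.range n, M i).filter p = ∑ i ∈ Finset.range n, (M i).filter p := by
  induction n with
  | zero => simp
  | succ n ih => rw [Finset.sum_range_succ, Finset.sum_range_succ, Multiset.filter_add, ih]

lemma range_filter_eq (N c : ℕ) :
    (List.range N).filter (fun j => j == c) = if c < N then [c] else [] := by
  induction N with
  | zero => simp
  | succ N ih =>
    rw [List.range_succ, List.filter_append, ih]
    by_cases h : c < N
    · have : ¬ (N == c) = true := by simp; omega
      simp [h, Nat.lt_succ_of_lt h, this]
    · by_cases h2 : c = N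
      · subst h2; simp [h]
      · have : ¬ (N == c) = true := by simp; omega
        have h3 : ¬ c < N + 1 := by omega
        simp [h, h3, this]

lemma filter_compMS (s : List Bool) (l : ℕ) (hl : 1 ≤ l) (hlm : l ≤ s.length) :
    (compMS s).filter (fun q => q.1 + q.2 = l) = compLen l s := by
  classical
  set m := s.length with hm
  rw [compMS, coe_flatMap_range, filter_sum_multiset]
  have step : ∀ i < m, ((↑((List.range (m - i)).map fun j => comp ((s.drop i).take (j + 1))) :
      Multiset (ℕ × ℕ)).filter (fun q => q.1 + q.2 = l))
      = if i + l ≤ m then ({comp ((s.drop i).take l)} : Multiset (ℕ × ℕ)) else 0 := by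
    intro i hi
    rw [Multiset.filter_coe, List.filter_map]
    have hcong : List.filter ((fun b => decide ((fun q : ℕ × ℕ => q.1 + q.2 = l) b)) ∘
          (fun j => comp ((s.drop i).take (j + 1)))) (List.range (m - i))
        = List.filter (fun j => j == l - 1) (List.range (m - i)) := by
      apply List.filter_congr
      intro j hj
      simp only [List.mem_range] at hj
      simp only [Function.comp_apply, comp_len, decide_eq_true_eq, beq_iff_eq]
      have hlen : ((s.drop i).take (j + 1)).length = j + 1 := by
        rw [List.length_take, List.length_drop]
        omega
      rw [hlen]
      rw [Bool.eq_iff_iff]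
      simp only [decide_eq_true_eq, beq_iff_eq]
      omega
    rw [hcong, range_filter_eq]
    by_cases h : l - 1 < m - i
    · have h2 : i + l ≤ m := by omega
      have h3 : l - 1 + 1 = l := by omega
      simp [h, h2, h3]
    · have h2 : ¬ (i + l ≤ m) := by omega
      simp [h, h2]
  rw [Finset.sum_congr rfl (fun i hi => step i (Finset.mem_range.mp hi))]
  rw [compLen, coe_map_range]
  rw [← hm, ← Finset.sum_filter]
  have : (Finset.range m).filter (fun i => i + l ≤ m) = Finset.range (m + 1 - l) := by
    ext i
    simp only [Finset.mem_filter, Finset.mem_range]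
    omega
  rw [this]


namespace SRTproof

/-- prefix count of `true`s, as an integer -/
def PZ (u : List Bool) (a : ℕ) : ℤ := ((u.take a).count true : ℤ)

/-- indicator of bit at position `a` -/
def bitZ (u : List Bool) (a : ℕ) : ℤ := if u.getD a false then 1 else 0

lemma bitZ_nonneg (u : List Bool) (a : ℕ) : 0 ≤ bitZ u a := by
  unfold bitZ; split <;> norm_num

lemma bitZ_le_one (u : List Bool) (a : ℕ) : bitZ u a ≤ 1 := by
  unfold bitZ; split <;> norm_num

lemma PZ_split (u : List Bool) (a c : ℕ) :
    PZ u (a + c) = PZ u a + (((u.drop a).take c).count true : ℤ) := by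
  unfold PZ
  rw [List.take_add, List.count_append]
  push_cast
  ring

lemma PZ_mono (u : List Bool) {a b : ℕ} (h : a ≤ b) : PZ u a ≤ PZ u b := by
  obtain ⟨c, rfl⟩ := Nat.exists_eq_add_of_le h
  rw [PZ_split]
  have : (0:ℤ) ≤ (((u.drop a).take c).count true : ℤ) := by positivity
  omega

lemma PZ_growth (u : List Bool) {a b : ℕ} (h : a ≤ b) : PZ u b ≤ PZ u a + (b - a : ℕ) := by
  obtain ⟨c, rfl⟩ := Nat.exists_eq_add_of_le h
  rw [PZ_split]
  have h1 : ((u.drop a).take c).count true ≤ c := by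
    calc ((u.drop a).take c).count true ≤ ((u.drop a).take c).length := List.count_le_length
      _ ≤ c := by rw [List.length_take]; omega
  have : a + c - a = c := by omega
  rw [this]
  exact_mod_cast add_le_add (le_refl _) (Nat.cast_le.mpr h1)

lemma PZ_succ (u : List Bool) {a : ℕ} (h : a < u.length) :
    PZ u (a + 1) = PZ u a + bitZ u a := by
  rw [PZ_split]
  congr 1
  have h1 : (u.drop a).take 1 = [u[a]] := by
    have hd : u.drop a = u[a] :: u.drop (a + 1) := List.drop_eq_getElem_cons h
    rw [hd, List.take_succ_cons, List.take_zero]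
  rw [h1]
  unfold bitZ
  rw [List.getD_eq_getElem?_getD, List.getElem?_eq_getElem h]
  cases hb : u[a] <;> simp [hb]

lemma PZ_stable (u : List Bool) {a : ℕ} (h : u.length ≤ a) : PZ u a = PZ u u.length := by
  unfold PZ
  rw [List.take_of_length_le h, List.take_length]

lemma PZ_zero (u : List Bool) : PZ u 0 = 0 := by unfold PZ; simp

/-- window weight cast lemma: for any `a l`,
`(((u.drop a).take l).count true : ℤ) = PZ u (a+l) - PZ u a` -/
lemma window_weight (u : List Bool) (a l : ℕ) :
    (((u.drop a).take l).count true : ℤ) = PZ u (a + l) - PZ u a := by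
  rw [PZ_split]; ring

lemma window_length (u : List Bool) {a l : ℕ} (h : a + l ≤ u.length) :
    ((u.drop a).take l).length = l := by
  rw [List.length_take, List.length_drop]
  omega

lemma count_false_add_count_true' (w : List Bool) :
    w.count false + w.count true = w.length := by
  induction w with
  | nil => simp
  | cons b l ih => cases b <;> simp [List.count_cons] <;> omega

end SRTproof

namespace SRTproof

section CodeFacts

variable {t m : ℕ} {u : List Bool}

/-- the filter predicate from `SRt` -/
def cpred (t m : ℕ) (u : List Bool) (i : ℕ) : Bool :=
  decide (t ≤ i) && decide (i < m - t) && (u.getD i false != u.getD (m - 1 - i) false)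

lemma m_ge_2t (ht : 1 ≤ t)
    (h0 : ∀ i < t, u.getD i false = false) (h1 : ∀ i < t, u.getD (m - 1 - i) false = true) :
    2 * t ≤ m := by
  by_contra h
  push_neg at h
  have e1 : u.getD (m - t) false = false := h0 (m - t) (by omega)
  have e2 : u.getD (m - 1 - (t - 1)) false = true := h1 (t - 1) (by omega)
  have : m - 1 - (t - 1) = m - t := by omega
  rw [this, e1] at e2
  exact Bool.false_ne_true e2

lemma prefix_zero (h0 : ∀ i < t, u.getD i false = false) (hlen : u.length = m)
    (hm2t : 2 * t ≤ m) {a : ℕ} (ha : a ≤ t) : PZ u a = 0 := by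
  induction a with
  | zero => exact PZ_zero u
  | succ n ih =>
    have hn : n < t := by omega
    have h2 : n < u.length := by omega
    rw [PZ_succ u h2, ih (by omega)]
    unfold bitZ
    rw [h0 n hn]
    simp

lemma suffix_one (h1 : ∀ i < t, u.getD (m - 1 - i) false = true) {i : ℕ}
    (hi1 : m - t ≤ i) (hi2 : i < m) : u.getD i false = true := by
  have := h1 (m - 1 - i) (by omega)
  have e : m - 1 - (m - 1 - i) = i := by omega
  rwa [e] at this

/-- `PZ u (m - c) = PZ u m - c` for `c ≤ t` (suffix is all ones) -/
lemma suffix_count (h1 : ∀ i < t, u.getD (m - 1 - i) false = true) (hlen : u.length = m)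
    (hm2t : 2 * t ≤ m) {c : ℕ} (hc : c ≤ t) : PZ u (m - c) = PZ u m - c := by
  have key : ∀ j : ℕ, j ≤ t → PZ u (m - j) = PZ u m - j := by
    intro j hj
    induction j with
    | zero => simp
    | succ n ih =>
      have hn : n ≤ t := by omega
      have idx : m - (n+1) < u.length := by omega
      have e : m - (n + 1) + 1 = m - n := by omega
      have := PZ_succ u idx
      rw [e] at this
      have hbit : bitZ u (m - (n+1)) = 1 := by
        unfold bitZ
        rw [suffix_one h1 (by omega) (by omega)]
        simp
      rw [hbit] at this
      have := ih hn
      push_cast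
      omega
  exact key c hc

end CodeFacts

end SRTproof

namespace SRTproof

section DFrame

variable {t m : ℕ} {s v : List Bool}

/-- the prefix-count difference -/
def dd (s v : List Bool) (a : ℕ) : ℤ := PZ s a - PZ v a

lemma sig_bits (hm : Even m) (hls : s.length = m) (hlv : v.length = m)
    (hσ : ∀ i, 1 ≤ i → i ≤ m / 2 → sigmaSeq s i = sigmaSeq v i)
    {i : ℕ} (hi : i < m / 2) :
    bitZ s i + bitZ s (m - 1 - i) = bitZ v i + bitZ v (m - 1 - i) := by
  have h := hσ (i + 1) (by omega) (by omega)
  unfold sigmaSeq at h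
  have h2 : 2 * (i + 1) ≤ m := by
    obtain ⟨c, rfl⟩ := hm
    omega
  rw [hls, hlv] at h
  simp only [if_pos h2] at h
  have e : m - (i + 1) = m - 1 - i := by omega
  rw [e] at h
  simp only [Nat.add_sub_cancel] at h
  unfold bitZ
  split_ifs at h ⊢ <;> omega

lemma dd_top (hm : Even m) (hls : s.length = m) (hlv : v.length = m)
    (hσ : ∀ i, 1 ≤ i → i ≤ m / 2 → sigmaSeq s i = sigmaSeq v i) :
    dd s v m = 0 := by
  have key : ∀ u : List Bool, u.length = m → PZ u m =
      (∑ i ∈ Finset.range (m/2), (bitZ u i + bitZ u (m - 1 - i))) := by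
    intro u hu
    have sum_all : ∀ a : ℕ, a ≤ m → PZ u a = ∑ i ∈ Finset.range a, bitZ u i := by
      intro a ha
      induction a with
      | zero => simp [PZ_zero]
      | succ n ih =>
        rw [Finset.sum_range_succ, ← ih (by omega), PZ_succ u (by omega)]
    have hsplit : m = m/2 + m/2 := by obtain ⟨c, rfl⟩ := hm; omega
    rw [sum_all m le_rfl]
    conv_lhs => rw [hsplit]
    rw [Finset.sum_range_add, Finset.sum_add_distrib]
    congr 1
    rw [← Finset.sum_range_reflect]
    apply Finset.sum_congr rfl
    intro i hi
    simp only [Finset.mem_range] at hi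
    congr 1
    omega
  unfold dd
  rw [key s hls, key v hlv]
  rw [sub_eq_zero]
  apply Finset.sum_congr rfl
  intro i hi
  exact sig_bits hm hls hlv hσ (Finset.mem_range.mp hi)

lemma dd_symm (hm : Even m) (hls : s.length = m) (hlv : v.length = m)
    (hσ : ∀ i, 1 ≤ i → i ≤ m / 2 → sigmaSeq s i = sigmaSeq v i)
    {a : ℕ} (ha : a ≤ m) : dd s v a = dd s v (m - a) := by
  have htop := dd_top hm hls hlv hσ
  have key : ∀ b : ℕ, b ≤ m / 2 → dd s v b = dd s v (m - b) := by
    intro b hb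
    induction b with
    | zero => rw [Nat.sub_zero, htop]; unfold dd; simp [PZ_zero]
    | succ n ih =>
      have hn : n < m / 2 := by omega
      have hmn : m - n = (m - n - 1) + 1 := by omega
      have e1 : dd s v (n + 1) = dd s v n + (bitZ s n - bitZ v n) := by
        unfold dd
        rw [PZ_succ s (by omega), PZ_succ v (by omega)]
        ring
      have e2 : dd s v (m - n) = dd s v (m - n - 1) + (bitZ s (m - 1 - n) - bitZ v (m - 1 - n)) := by
        unfold dd
        conv_lhs => rw [hmn]
        rw [PZ_succ s (by rw [hls]; omega), PZ_succ v (by rw [hlv]; omega)]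
        have e : m - n - 1 = m - 1 - n := by omega
        rw [e]
        ring
      have e3 := sig_bits hm hls hlv hσ hn
      have e4 : m - (n + 1) = m - n - 1 := by omega
      rw [e4]
      have := ih (by omega)
      omega
  by_cases hc : a ≤ m / 2
  · exact key a hc
  · have hb : m - a ≤ m / 2 := by obtain ⟨c, rfl⟩ := hm; omega
    have := key (m - a) hb
    have e : m - (m - a) = a := by omega
    rw [e] at this
    omega

end DFrame

end SRTproof

namespace SRTproof

section RFacts

variable {t m : ℕ} {s v : List Bool}

lemma exists_dd_ne (hls : s.length = m) (hlv : v.length = m) (hne : s ≠ v) :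
    ∃ a, dd s v a ≠ 0 := by
  by_contra h
  push_neg at h
  apply hne
  apply List.ext_getElem (by omega)
  intro n h1 h2
  have hb : bitZ s n = bitZ v n := by
    have e1 := PZ_succ s (a := n) (by omega)
    have e2 := PZ_succ v (a := n) (by omega)
    have d1 := h n
    have d2 := h (n + 1)
    unfold dd at d1 d2
    omega
  unfold bitZ at hb
  rw [List.getD_eq_getElem?_getD, List.getElem?_eq_getElem h1] at hb
  rw [List.getD_eq_getElem?_getD, List.getElem?_eq_getElem h2] at hb
  cases hb1 : s[n] <;> cases hb2 : v[n] <;> simp [hb1, hb2] at hb ⊢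

end RFacts

section Balance

variable (t m : ℕ) (u : List Bool)

/-- integer balance (#false − #true) of the CB-subsequence restricted to positions `< q` -/
def balZ (q : ℕ) : ℤ :=
  ((((List.range q).filter (cpred t m u)).map (fun i => u.getD i false)).count false : ℤ)
  - ((((List.range q).filter (cpred t m u)).map (fun i => u.getD i false)).count true : ℤ)

variable {t m u}

lemma balZ_succ (q : ℕ) :
    balZ t m u (q + 1) = balZ t m u q + (if cpred t m u q then 1 - 2 * bitZ u q else 0) := by
  unfold balZ
  rw [List.range_succ, List.filter_append]
  by_cases h : cpred t m u q
  · rw [if_pos h]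
    have h2 : List.filter (cpred t m u) [q] = [q] := by simp [h]
    rw [h2, List.map_append, List.count_append, List.count_append]
    simp only [List.map_cons, List.map_nil]
    have hsing : ((([u.getD q false]).count false : ℤ)) - (([u.getD q false]).count true : ℤ)
        = 1 - 2 * bitZ u q := by
      unfold bitZ
      cases hb : u.getD q false <;> simp
    push_cast at hsing ⊢
    linarith [hsing]
  · rw [if_neg h]
    have : List.filter (cpred t m u) [q] = [] := by
      simp only [List.filter_cons, List.filter_nil]
      rw [if_neg (by simp [h])]
    rw [this, List.append_nil]
    ring

/-- CB gives balance ≥ 1 on nonempty prefixes -/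
lemma balZ_ge_one (hcb : IsCB (((List.range (m/2)).filter (cpred t m u)).map
      (fun i => u.getD i false)))
    {q : ℕ} (hq : q ≤ m / 2) (hne : ∃ i < q, cpred t m u i) :
    1 ≤ balZ t m u q := by
  set L := (List.range q).filter (cpred t m u) with hL
  set R := (List.range' q (m/2 - q)).filter (cpred t m u) with hR
  have hsplit : (List.range (m/2)).filter (cpred t m u) = L ++ R := by
    rw [hL, hR, ← List.filter_append]
    congr 1
    rw [List.range_eq_range', List.range_eq_range']
    have h3 := List.range'_append (s := 0) (m := q) (n := m/2 - q) (step := 1)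
    simp only [one_mul, zero_add] at h3
    conv_lhs => rw [show m/2 = q + (m/2 - q) by omega]
    exact h3.symm
  have hj : 1 ≤ L.length := by
    obtain ⟨i, hi1, hi2⟩ := hne
    have : i ∈ L := by
      rw [hL, List.mem_filter]
      exact ⟨List.mem_range.mpr hi1, hi2⟩
    have := List.length_pos_iff.mpr (List.ne_nil_of_mem this)
    omega
  have hcb2 := hcb L.length hj (by
    rw [List.length_map, hsplit, List.length_append]
    omega)
  have htake : ((((List.range (m/2)).filter (cpred t m u)).map
      (fun i => u.getD i false)).take L.length) = L.map (fun i => u.getD i false) := by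
    rw [hsplit, List.map_append]
    have : L.length = (L.map (fun i => u.getD i false)).length := by simp
    rw [this, List.take_left]
  rw [htake] at hcb2
  unfold balZ
  rw [← hL]
  omega

end Balance

end SRTproof

namespace SRTproof

section Pairing

variable {t m : ℕ} {u : List Bool}

lemma pairing (ht : 1 ≤ t) (hlen : u.length = m)
    (h0 : ∀ i < t, u.getD i false = false) (h1 : ∀ i < t, u.getD (m - 1 - i) false = true)
    (hm2t : 2 * t ≤ m) (hme : Even m) :
    ∀ q, q ≤ m / 2 →
      (PZ u m - PZ u (m - q)) - PZ u q = (min q t : ℕ) + balZ t m u q := by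
  intro q
  induction q with
  | zero =>
    intro _
    simp [balZ, PZ_zero]
  | succ n ih =>
    intro hq
    have hn2 : n < m / 2 := by omega
    have hnm : n < m := by omega
    have e1 : PZ u (n + 1) = PZ u n + bitZ u n := PZ_succ u (by omega)
    have e2 : PZ u (m - n) = PZ u (m - n - 1) + bitZ u (m - 1 - n) := by
      have idx : m - n - 1 < u.length := by omega
      have e : m - n - 1 + 1 = m - n := by omega
      have := PZ_succ u idx
      rw [e] at this
      rw [this]
      congr 2
      omega
    have e2' : m - (n + 1) = m - n - 1 := by omega
    have e3 := balZ_succ (t := t) (m := m) (u := u) n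
    have ihn := ih (by omega)
    by_cases hc : n < t
    · -- in the shift zone
      have hcp : cpred t m u n = false := by
        unfold cpred
        have : ¬ (t ≤ n) := by omega
        simp [this]
      have hb0 : bitZ u n = 0 := by unfold bitZ; rw [h0 n hc]; simp
      have hb1 : bitZ u (m - 1 - n) = 1 := by unfold bitZ; rw [h1 n hc]; simp
      rw [hcp] at e3
      simp only [Bool.false_eq_true, if_false] at e3
      have hmin1 : min (n+1) t = n + 1 := by omega
      have hmin2 : min n t = n := by omega
      rw [hmin1] at *
      rw [hmin2] at ihn
      rw [e2']
      push_cast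
      omega
    · -- beyond the shift zone
      push_neg at hc
      have hmin1 : min (n+1) t = t := by omega
      have hmin2 : min n t = t := by omega
      rw [hmin1]
      rw [hmin2] at ihn
      have hlt : n < m - t := by omega
      by_cases hcp : cpred t m u n = true
      · have hne : u.getD n false ≠ u.getD (m - 1 - n) false := by
          unfold cpred at hcp
          simp only [Bool.and_eq_true, decide_eq_true_eq, bne_iff_ne, ne_eq] at hcp
          exact hcp.2
        have hbits : bitZ u (m - 1 - n) = 1 - bitZ u n := by
          unfold bitZ
          cases hb : u.getD n false
          · rw [hb] at hne
            have : u.getD (m-1-n) false = true := by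
              cases hb2 : u.getD (m-1-n) false
              · rw [hb2] at hne; exact absurd rfl hne
              · rfl
            rw [this]; simp
          · rw [hb] at hne
            have : u.getD (m-1-n) false = false := by
              cases hb2 : u.getD (m-1-n) false
              · rfl
              · rw [hb2] at hne; exact absurd rfl hne
            rw [this]; simp
        rw [hcp] at e3
        simp only [if_true] at e3
        rw [e2']
        omega
      · have hcpf : cpred t m u n = false := by
          cases hcc : cpred t m u n
          · rfl
          · exact absurd hcc hcp
        have heq : u.getD n false = u.getD (m - 1 - n) false := by
          unfold cpred at hcpf
          have h4 : decide (t ≤ n) = true := by simp [hc]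
          have h5 : decide (n < m - t) = true := by simp [hlt]
          rw [h4, h5] at hcpf
          simp only [Bool.true_and] at hcpf
          rwa [bne_eq_false_iff_eq] at hcpf
        have hbits : bitZ u (m - 1 - n) = bitZ u n := by
          unfold bitZ; rw [heq]
        rw [hcpf] at e3
        simp only [Bool.false_eq_true, if_false] at e3
        rw [e2']
        omega

end Pairing

end SRTproof

namespace SRTproof

lemma F_eq {t m : ℕ} {s v : List Bool} (hme : Even m) (hls : s.length = m) (hlv : v.length = m)
    (hσ : ∀ i, 1 ≤ i → i ≤ m / 2 → sigmaSeq s i = sigmaSeq v i)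
    {i : ℕ} (hi : i < m / 2) : cpred t m s i = cpred t m v i := by
  have hb := sig_bits hme hls hlv hσ hi
  unfold cpred
  congr 1
  unfold bitZ at hb
  cases h1 : s.getD i false <;> cases h2 : s.getD (m-1-i) false <;>
    cases h3 : v.getD i false <;> cases h4 : v.getD (m-1-i) false <;>
    rw [h1, h2, h3, h4] at hb <;> simp at hb ⊢ <;> omega

theorem core (t m : ℕ) (ht : 1 ≤ t) (hme : Even m) (s v : List Bool)
    (hls : s.length = m)
    (h0s : ∀ i < t, s.getD i false = false) (h1s : ∀ i < t, s.getD (m - 1 - i) false = true)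
    (hcbs : IsCB (((List.range (m / 2)).filter (cpred t m s)).map fun i => s.getD i false))
    (hlv : v.length = m)
    (h0v : ∀ i < t, v.getD i false = false) (h1v : ∀ i < t, v.getD (m - 1 - i) false = true)
    (hcbv : IsCB (((List.range (m / 2)).filter (cpred t m v)).map fun i => v.getD i false))
    (hne : s ≠ v)
    (hσ : ∀ i, 1 ≤ i → i ≤ m / 2 → sigmaSeq s i = sigmaSeq v i) :
    ∃ r : ℕ, t + 2 ≤ r ∧ r ≤ m / 2 ∧
      ∀ k ≤ t, compLen (m - r - k) s ≠ compLen (m - r - k) v := by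
  classical
  have hm2t : 2 * t ≤ m := m_ge_2t ht h0s h1s
  have htm2 : t ≤ m / 2 := by obtain ⟨c, hc⟩ := hme; omega
  -- the first index where prefix counts differ
  have hex : ∃ a, dd s v a ≠ 0 := exists_dd_ne hls hlv hne
  set r := Nat.find hex with hrdef
  have hdr : dd s v r ≠ 0 := Nat.find_spec hex
  have hmin : ∀ a, a < r → dd s v a = 0 := by
    intro a ha
    by_contra h
    have h2 : Nat.find hex ≤ a := Nat.find_le h
    rw [hrdef] at ha
    omega
  have htop : dd s v m = 0 := dd_top hme hls hlv hσ
  have hsym : ∀ a, a ≤ m → dd s v a = dd s v (m - a) :=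
    fun a ha => dd_symm hme hls hlv hσ ha
  have hrm : r < m := by
    rcases lt_trichotomy r m with h | h | h
    · exact h
    · rw [h] at hdr; exact absurd htop hdr
    · exfalso
      apply hdr
      unfold dd
      rw [PZ_stable s (by omega), PZ_stable v (by omega), hls, hlv]
      unfold dd at htop
      exact htop
  have hr_half : r ≤ m / 2 := by
    by_contra h
    push_neg at h
    have h1 : m - r < r := by obtain ⟨c, hc⟩ := hme; omega
    have := hsym r (by omega)
    rw [hmin (m - r) h1] at this
    exact hdr this
  have hr1 : 1 ≤ r := by
    rcases Nat.eq_zero_or_pos r with h | h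
    · exfalso; apply hdr; rw [h]; unfold dd; rw [PZ_zero, PZ_zero]; ring
    · exact h
  set p := r - 1 with hpdef
  have hrp : r = p + 1 := by omega
  have hdp : dd s v p = 0 := hmin p (by omega)
  have hstep : dd s v r = bitZ s p - bitZ v p := by
    unfold dd
    rw [hrp, PZ_succ s (by omega), PZ_succ v (by omega)]
    unfold dd at hdp
    omega
  have hbne : s.getD p false ≠ v.getD p false := by
    intro h
    apply hdr
    rw [hstep]
    unfold bitZ
    rw [h]
    ring
  have ht_le_p : t ≤ p := by
    by_contra h
    push_neg at h
    have : r ≤ t := by omega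
    apply hdr
    unfold dd
    rw [prefix_zero h0s hls hm2t this, prefix_zero h0v hlv hm2t this]
    ring
  have hp_half : p < m / 2 := by omega
  -- p is in the filter set for both strings
  have hcp_s : cpred t m s p = true := by
    have hb := sig_bits hme hls hlv hσ hp_half
    unfold cpred
    have c1 : decide (t ≤ p) = true := by simp [ht_le_p]
    have c2 : decide (p < m - t) = true := by simp; omega
    rw [c1, c2]
    simp only [Bool.true_and]
    unfold bitZ at hb
    revert hbne
    cases h1 : s.getD p false <;> cases h2 : s.getD (m-1-p) false <;>
      cases h3 : v.getD p false <;> cases h4 : v.getD (m-1-p) false <;>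
      rw [h1, h2, h3, h4] at hb <;> simp at hb ⊢ <;> omega
  have hcp_v : cpred t m v p = true := by
    rw [← F_eq hme hls hlv hσ hp_half]
    exact hcp_s
  -- there is an earlier filter position
  have hw_s : ∃ i, i < p ∧ cpred t m s i = true := by
    by_contra h
    push_neg at h
    have hempty_s : (List.range p).filter (cpred t m s) = [] := by
      apply List.filter_eq_nil_iff.mpr
      intro a ha
      have := h a (List.mem_range.mp ha)
      simp [this]
    have hempty_v : (List.range p).filter (cpred t m v) = [] := by
      apply List.filter_eq_nil_iff.mpr
      intro a ha
      have hlt := List.mem_range.mp ha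
      have := h a hlt
      rw [← F_eq hme hls hlv hσ (by omega)]
      simp [this]
    have key : ∀ (u : List Bool), u.length = m → cpred t m u p = true →
        IsCB (((List.range (m / 2)).filter (cpred t m u)).map fun i => u.getD i false) →
        (List.range p).filter (cpred t m u) = [] → bitZ u p = 0 := by
      intro u hlu hcpu hcbu hemptyu
      have hb0 : balZ t m u p = 0 := by unfold balZ; rw [hemptyu]; simp
      have hb1 : balZ t m u (p + 1) = 1 - 2 * bitZ u p := by
        rw [balZ_succ, hb0, hcpu]
        simp
      have hge := balZ_ge_one hcbu (q := p + 1) (by omega) ⟨p, by omega, hcpu⟩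
      rw [hb1] at hge
      have := bitZ_nonneg u p
      have := bitZ_le_one u p
      omega
    have hs0 := key s hls hcp_s hcbs hempty_s
    have hv0 := key v hlv hcp_v hcbv hempty_v
    apply hdr
    rw [hstep, hs0, hv0]
    ring
  have hw_v : ∃ i, i < p ∧ cpred t m v i = true := by
    obtain ⟨i, hi1, hi2⟩ := hw_s
    exact ⟨i, hi1, by rw [← F_eq hme hls hlv hσ (by omega)]; exact hi2⟩
  have ht1_le_p : t + 1 ≤ p := by
    obtain ⟨i, hi1, hi2⟩ := hw_s
    unfold cpred at hi2
    simp only [Bool.and_eq_true, decide_eq_true_eq] at hi2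
    omega
  -- balance lower bounds
  have hbal : ∀ (u : List Bool), u.length = m → cpred t m u p = true →
      IsCB (((List.range (m / 2)).filter (cpred t m u)).map fun i => u.getD i false) →
      (∃ i, i < p ∧ cpred t m u i = true) →
      2 - bitZ u p ≤ balZ t m u r := by
    intro u hlu hcpu hcbu hwu
    obtain ⟨i, hi1, hi2⟩ := hwu
    cases hb : u.getD p false
    · -- bit is 0 : balance ≥ 2
      have hbp : 1 ≤ balZ t m u p := balZ_ge_one hcbu (by omega) ⟨i, by omega, hi2⟩
      have hstep2 : balZ t m u (p+1) = balZ t m u p + 1 := by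
        rw [balZ_succ, hcpu]
        unfold bitZ
        rw [hb]
        simp
      have hbit : bitZ u p = 0 := by unfold bitZ; rw [hb]; simp
      rw [hbit, hrp, hstep2]
      omega
    · -- bit is 1 : balance ≥ 1
      have hbr : 1 ≤ balZ t m u r := balZ_ge_one hcbu hr_half ⟨p, by omega, hcpu⟩
      have hbit : bitZ u p = 1 := by unfold bitZ; rw [hb]; simp
      rw [hbit]
      omega
  have hbal_s := hbal s hls hcp_s hcbs hw_s
  have hbal_v := hbal v hlv hcp_v hcbv hw_v
  -- the common weight and threshold
  set W := PZ s m with hWdef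
  have hWv : PZ v m = W := by unfold dd at htop; omega
  have hP0 : PZ s p = PZ v p := by unfold dd at hdp; omega
  have hPZr_s : PZ s r = PZ s p + bitZ s p := by rw [hrp]; exact PZ_succ s (by omega)
  have hPZr_v : PZ v r = PZ v p + bitZ v p := by rw [hrp]; exact PZ_succ v (by omega)
  set Pmax := max (PZ s r) (PZ v r) with hPmax
  have hPmax_eq : Pmax = PZ s p + 1 := by
    have h1 := bitZ_nonneg s p
    have h2 := bitZ_le_one s p
    have h3 := bitZ_nonneg v p
    have h4 := bitZ_le_one v p
    have h5 : bitZ s p ≠ bitZ v p := by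
      intro h
      apply hdr
      rw [hstep, h]
      ring
    rw [hPmax, hPZr_s, hPZr_v, ← hP0]
    rcases max_cases (PZ s p + bitZ s p) (PZ s p + bitZ v p) with ⟨h6, h7⟩ | ⟨h6, h7⟩ <;> omega
  set θ := W - Pmax - t with hθdef
  -- the pairing bound:  PZ u (m - r) < θ
  have hpair : ∀ (u : List Bool), u.length = m →
      (∀ i < t, u.getD i false = false) → (∀ i < t, u.getD (m - 1 - i) false = true) →
      PZ u m = W → PZ u p = PZ s p → (2 - bitZ u p ≤ balZ t m u r) →
      (PZ u r = PZ u p + bitZ u p) →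
      PZ u (m - r) < θ := by
    intro u hlu h0u h1u hWu hPu hbu hru
    have hq := pairing ht hlu h0u h1u hm2t hme r hr_half
    have hminrt : min r t = t := by omega
    rw [hminrt, hWu] at hq
    rw [hθdef, hPmax_eq]
    push_cast at hq ⊢
    have hbb := bitZ_le_one u p
    -- PZ u (m-r) = W - t - bal - PZ u r
    omega
  have hA_s := hpair s hls h0s h1s rfl rfl hbal_s hPZr_s
  have hA_v := hpair v hlv h0v h1v hWv (by omega) hbal_v hPZr_v
  -- now the separation argument for each k ≤ t
  refine ⟨r, by omega, hr_half, ?_⟩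
  intro k hk
  rw [show m - r - k = m - (r + k) from by omega]
  set K := r + k with hKdef
  have hKm : K ≤ m := by omega
  set l := m - K with hldef
  have hl1 : 1 ≤ l := by
    have : K ≤ m / 2 + t := by omega
    obtain ⟨c, hc⟩ := hme
    omega
  intro hXY
  -- window function
  have hNs : s.length + 1 - l = K + 1 := by omega
  have hNv : v.length + 1 - l = K + 1 := by omega
  set gs : ℕ → ℕ × ℕ := fun i => comp ((s.drop i).take l) with hgs
  set gv : ℕ → ℕ × ℕ := fun i => comp ((v.drop i).take l) with hgv
  have hXdef : compLen l s = ↑((List.range (K+1)).map gs) := by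
    unfold compLen
    rw [hNs]
  have hYdef : compLen l v = ↑((List.range (K+1)).map gv) := by
    unfold compLen
    rw [hNv]
  -- split the range
  have hsplit : List.range (K + 1) =
      (List.range' 0 (k+1) ++ List.range' (k+1) (p - k)) ++ List.range' (p+1) (k+1) := by
    rw [List.range_eq_range']
    have e1 := List.range'_append (s := 0) (m := k+1) (n := p - k) (step := 1)
    simp only [one_mul, zero_add] at e1
    have e2 : k + 1 + (p - k) = p + 1 := by omega
    rw [e2] at e1
    have e3 := List.range'_append (s := 0) (m := p+1) (n := k+1) (step := 1)
    simp only [one_mul, zero_add] at e3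
    have e4 : p + 1 + (k + 1) = K + 1 := by omega
    rw [e4] at e3
    rw [← e3, ← e1]
  -- window weights in ℤ
  have hsnd : ∀ (u : List Bool) (a : ℕ),
      ((comp ((u.drop a).take l)).2 : ℤ) = PZ u (a + l) - PZ u a :=
    fun u a => window_weight u a l
  -- the C-part lower bound
  have hCbound : ∀ (u : List Bool), u.length = m →
      (∀ i < t, u.getD (m - 1 - i) false = true) → PZ u m = W →
      ∀ a, p + 1 ≤ a → a < K + 1 → W - k - PZ u r ≤ PZ u (a + l) - PZ u a := by
    intro u hlu h1u hWu a ha1 ha2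
    have he : a + l = m - (K - a) := by omega
    have hsc : PZ u (m - (K - a)) = PZ u m - ((K - a : ℕ) : ℤ) :=
      suffix_count h1u hlu hm2t (by omega)
    have hgr : PZ u a ≤ PZ u r + ((a - r : ℕ) : ℤ) := PZ_growth u (by omega)
    rw [he, hsc, hWu]
    have e1 : ((K - a : ℕ) : ℤ) = (K : ℤ) - a := by
      have : a ≤ K := by omega
      push_cast [Nat.cast_sub this]
      ring
    have e2 : ((a - r : ℕ) : ℤ) = (a : ℤ) - r := by
      have : r ≤ a := by omega
      push_cast [Nat.cast_sub this]
      ring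
    rw [e1] at *
    rw [e2] at hgr
    have e3 : (K : ℤ) = (r : ℤ) + k := by push_cast [hKdef]; ring
    omega
  -- value of the weight of the window starting at r
  have hrval : ∀ (u : List Bool), u.length = m →
      (∀ i < t, u.getD (m - 1 - i) false = true) → PZ u m = W →
      PZ u (r + l) - PZ u r = W - k - PZ u r := by
    intro u hlu h1u hWu
    have he : r + l = m - k := by omega
    have hsc : PZ u (m - k) = PZ u m - (k : ℤ) := suffix_count h1u hlu hm2t hk
    rw [he, hsc, hWu]
  -- the threshold predicate
  set hp : ℕ × ℕ → Prop := fun q => θ ≤ (q.2 : ℤ) with hhp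
  -- A-part fails the threshold
  have hAfail : ∀ (u : List Bool), u.length = m → (∀ i < t, u.getD i false = false) →
      PZ u (m - r) < θ → ∀ a, a < k + 1 → ¬ hp (comp ((u.drop a).take l)) := by
    intro u hlu h0u hAu a ha
    rw [hhp]
    simp only [not_le]
    rw [hsnd u a]
    have hz : PZ u a = 0 := prefix_zero h0u hlu hm2t (by omega)
    have hmono : PZ u (a + l) ≤ PZ u (m - r) := PZ_mono u (by omega)
    omega
  -- B-part is identical for s and v
  have hBeq : ∀ a ∈ List.range' (k+1) (p - k), comp ((s.drop a).take l) = comp ((v.drop a).take l) := by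
    intro a ha
    rw [List.mem_range'_1] at ha
    have h1 : dd s v a = 0 := hmin a (by omega)
    have h2 : dd s v (a + l) = 0 := by
      have e : a + l = m - (K - a) := by omega
      have h3 := hsym (K - a) (by omega)
      rw [e, ← h3]
      exact hmin (K - a) (by omega)
    have hct : ((s.drop a).take l).count true = ((v.drop a).take l).count true := by
      have hz : (((s.drop a).take l).count true : ℤ) = (((v.drop a).take l).count true : ℤ) := by
        rw [window_weight, window_weight]
        unfold dd at h1 h2
        omega
      exact_mod_cast hz
    have hlens : ((s.drop a).take l).length = l := window_length s (by omega)
    have hlenv : ((v.drop a).take l).length = l := window_length v (by omega)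
    have hcf : ((s.drop a).take l).count false = ((v.drop a).take l).count false := by
      have e1 := count_false_add_count_true' ((s.drop a).take l)
      have e2 := count_false_add_count_true' ((v.drop a).take l)
      omega
    show comp ((s.drop a).take l) = comp ((v.drop a).take l)
    unfold comp
    rw [hct, hcf]
  -- C-part passes the threshold
  have hCpass : ∀ (u : List Bool), u.length = m →
      (∀ i < t, u.getD (m - 1 - i) false = true) → PZ u m = W → PZ u r ≤ Pmax →
      ∀ a, p + 1 ≤ a → a < K + 1 → hp (comp ((u.drop a).take l)) := by
    intro u hlu h1u hWu hPu a ha1 ha2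
    rw [hhp]
    show θ ≤ _
    rw [hsnd u a]
    have := hCbound u hlu h1u hWu a ha1 ha2
    have hkt : (k : ℤ) ≤ (t : ℤ) := by exact_mod_cast hk
    omega
  -- now filter the multiset equation
  have hfs : (compLen l s).filter hp
      = (↑((List.range' (k+1) (p-k)).map gs) : Multiset (ℕ × ℕ)).filter hp
        + ↑((List.range' (p+1) (k+1)).map gs) := by
    rw [hXdef, hsplit, List.map_append, List.map_append, ← Multiset.coe_add, ← Multiset.coe_add,
      Multiset.filter_add, Multiset.filter_add]
    have hA0 : (↑((List.range' 0 (k+1)).map gs) : Multiset (ℕ × ℕ)).filter hp = 0 := by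
      rw [Multiset.filter_eq_nil]
      intro q hq
      rw [Multiset.mem_coe, List.mem_map] at hq
      obtain ⟨a, ha, rfl⟩ := hq
      rw [List.mem_range'_1] at ha
      exact hAfail s hls h0s hA_s a (by omega)
    have hC1 : (↑((List.range' (p+1) (k+1)).map gs) : Multiset (ℕ × ℕ)).filter hp
        = ↑((List.range' (p+1) (k+1)).map gs) := by
      rw [Multiset.filter_eq_self]
      intro q hq
      rw [Multiset.mem_coe, List.mem_map] at hq
      obtain ⟨a, ha, rfl⟩ := hq
      rw [List.mem_range'_1] at ha
      exact hCpass s hls h1s rfl (le_max_left _ _) a (by omega) (by omega)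
    rw [hA0, hC1]
    simp
  have hfv : (compLen l v).filter hp
      = (↑((List.range' (k+1) (p-k)).map gv) : Multiset (ℕ × ℕ)).filter hp
        + ↑((List.range' (p+1) (k+1)).map gv) := by
    rw [hYdef, hsplit, List.map_append, List.map_append, ← Multiset.coe_add, ← Multiset.coe_add,
      Multiset.filter_add, Multiset.filter_add]
    have hA0 : (↑((List.range' 0 (k+1)).map gv) : Multiset (ℕ × ℕ)).filter hp = 0 := by
      rw [Multiset.filter_eq_nil]
      intro q hq
      rw [Multiset.mem_coe, List.mem_map] at hq
      obtain ⟨a, ha, rfl⟩ := hq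
      rw [List.mem_range'_1] at ha
      exact hAfail v hlv h0v hA_v a (by omega)
    have hC1 : (↑((List.range' (p+1) (k+1)).map gv) : Multiset (ℕ × ℕ)).filter hp
        = ↑((List.range' (p+1) (k+1)).map gv) := by
      rw [Multiset.filter_eq_self]
      intro q hq
      rw [Multiset.mem_coe, List.mem_map] at hq
      obtain ⟨a, ha, rfl⟩ := hq
      rw [List.mem_range'_1] at ha
      exact hCpass v hlv h1v hWv (le_max_right _ _) a (by omega) (by omega)
    rw [hA0, hC1]
    simp
  have hBmap : (List.range' (k+1) (p-k)).map gs = (List.range' (k+1) (p-k)).map gv :=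
    List.map_congr_left hBeq
  have hCeq : (↑((List.range' (p+1) (k+1)).map gs) : Multiset (ℕ × ℕ))
      = ↑((List.range' (p+1) (k+1)).map gv) := by
    have h1 : (compLen l s).filter hp = (compLen l v).filter hp := by rw [hXY]
    rw [hfs, hfv, hBmap] at h1
    exact add_left_cancel h1
  -- refute:  both directions give PZ s r = PZ v r
  have hr_mem : r ∈ List.range' (p+1) (k+1) := by
    rw [List.mem_range'_1]
    omega
  have dir1 : PZ s r ≤ PZ v r := by
    have hmem : gs r ∈ (↑((List.range' (p+1) (k+1)).map gv) : Multiset (ℕ × ℕ)) := by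
      rw [← hCeq, Multiset.mem_coe]
      exact List.mem_map_of_mem (f := gs) hr_mem
    rw [Multiset.mem_coe, List.mem_map] at hmem
    obtain ⟨a, ha, hval⟩ := hmem
    rw [List.mem_range'_1] at ha
    have hsv : PZ v (a + l) - PZ v a = PZ s (r + l) - PZ s r := by
      have := congrArg (fun q : ℕ × ℕ => (q.2 : ℤ)) hval
      simp only [hgs, hgv] at this
      rw [hsnd v a, hsnd s r] at this
      exact this
    have hb := hCbound v hlv h1v hWv a ha.1 (by omega)
    have hv := hrval s hls h1s rfl
    rw [hsv, hv] at hb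
    omega
  have dir2 : PZ v r ≤ PZ s r := by
    have hmem : gv r ∈ (↑((List.range' (p+1) (k+1)).map gs) : Multiset (ℕ × ℕ)) := by
      rw [hCeq, Multiset.mem_coe]
      exact List.mem_map_of_mem (f := gv) hr_mem
    rw [Multiset.mem_coe, List.mem_map] at hmem
    obtain ⟨a, ha, hval⟩ := hmem
    rw [List.mem_range'_1] at ha
    have hsv : PZ s (a + l) - PZ s a = PZ v (r + l) - PZ v r := by
      have := congrArg (fun q : ℕ × ℕ => (q.2 : ℤ)) hval
      simp only [hgs, hgv] at this
      rw [hsnd s a, hsnd v r] at this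
      exact this
    have hb := hCbound s hls h1s rfl a ha.1 (by omega)
    have hv := hrval v hlv h1v hWv
    rw [hsv, hv] at hb
    omega
  apply hdr
  unfold dd
  omega

end SRTproof

namespace SRTproof

lemma list_sum_range {M : Type*} [AddCommMonoid M] (n : ℕ) (f : ℕ → M) :
    ((List.range n).map f).sum = ∑ i ∈ Finset.range n, f i := by
  induction n with
  | zero => simp
  | succ n ih =>
    rw [List.range_succ, List.map_append, List.sum_append, Finset.sum_range_succ, ih]
    simp

lemma card_compLen (u : List Bool) (l : ℕ) :
    Multiset.card (compLen l u) = u.length + 1 - l := by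
  unfold compLen
  rw [Multiset.coe_card, List.length_map, List.length_range]

lemma mem_compLen_len (u : List Bool) {l : ℕ} (hl : l ≤ u.length) :
    ∀ q ∈ compLen l u, q.1 + q.2 = l := by
  intro q hq
  unfold compLen at hq
  rw [Multiset.mem_coe, List.mem_map] at hq
  obtain ⟨a, ha, rfl⟩ := hq
  rw [List.mem_range] at ha
  have h1 : comp ((u.drop a).take l) = (((u.drop a).take l).count false, ((u.drop a).take l).count true) := rfl
  rw [h1]
  simp only
  rw [count_false_add_count_true']
  exact window_length u (by omega)

lemma sum_snd_compLen {t m : ℕ} {s v : List Bool} (hme : Even m)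
    (hls : s.length = m) (hlv : v.length = m)
    (hσ : ∀ i, 1 ≤ i → i ≤ m / 2 → sigmaSeq s i = sigmaSeq v i)
    {l : ℕ} (hl1 : 1 ≤ l) (hlm : l ≤ m) :
    ((compLen l s).map Prod.snd).sum = ((compLen l v).map Prod.snd).sum := by
  have key : ∀ (u : List Bool), u.length = m →
      (((compLen l u).map Prod.snd).sum : ℤ)
        = ∑ a ∈ Finset.range (m + 1 - l), (PZ u (a + l) - PZ u a) := by
    intro u hlu
    unfold compLen
    rw [hlu, Multiset.map_coe, Multiset.sum_coe, List.map_map, list_sum_range]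
    rw [Nat.cast_sum]
    apply Finset.sum_congr rfl
    intro a _
    exact window_weight u a l
  have hz : (((compLen l s).map Prod.snd).sum : ℤ) = (((compLen l v).map Prod.snd).sum : ℤ) := by
    rw [key s hls, key v hlv]
    rw [sub_eq_zero.symm, ← Finset.sum_sub_distrib]
    have step : ∀ a ∈ Finset.range (m + 1 - l),
        (PZ s (a + l) - PZ s a) - (PZ v (a + l) - PZ v a) = dd s v (a + l) - dd s v a := by
      intro a _
      unfold dd
      ring
    rw [Finset.sum_congr rfl step, Finset.sum_sub_distrib, sub_eq_zero]
    have refl1 : ∀ a ∈ Finset.range (m + 1 - l), dd s v (a + l) = dd s v ((m + 1 - l) - 1 - a) := by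
      intro a ha
      rw [Finset.mem_range] at ha
      have h1 : a + l ≤ m := by omega
      have h2 := dd_symm hme hls hlv hσ h1
      have e : m - (a + l) = (m + 1 - l) - 1 - a := by omega
      rw [h2, e]
    rw [Finset.sum_congr rfl refl1, Finset.sum_range_reflect]
  exact_mod_cast hz

end SRTproof


theorem SRt_corrects_asymmetric_errors' (m t : ℕ) (hm : Even m) (ht : 1 ≤ t)
    (s v : List Bool) (hs : s ∈ SRt t m) (hv : v ∈ SRt t m) (hne : s ≠ v)
    (hσ : ∀ i, 1 ≤ i → i ≤ m / 2 → sigmaSeq s i = sigmaSeq v i) :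
    ¬ ∃ D : Multiset (ℕ × ℕ), AsymErr t m s D ∧ AsymErr t m v D := by
  classical
  rintro ⟨D, hS, hV⟩
  obtain ⟨hAs, -⟩ := hS
  obtain ⟨hAv, -⟩ := hV
  obtain ⟨hls, h0s, h1s, hcbs⟩ := hs
  obtain ⟨hlv, h0v, h1v, hcbv⟩ := hv
  have hup : Multiset.card (compMS s - compMS v) ≤ 2 * t := main_upper hAs hAv
  obtain ⟨r, hr2, hrh, hdiff⟩ := SRTproof.core t m ht hm s v hls h0s h1s hcbs hlv h0v h1v hcbv hne hσ
  have hm2t : 2 * t ≤ m := SRTproof.m_ge_2t ht h0s h1s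
  have hmm : m / 2 + m / 2 = m := by obtain ⟨c, hc⟩ := hm; omega
  have hreq : r + t + 2 ≤ m := by omega
  set L : Finset ℕ := (Finset.range (t + 1)).image (fun k => m - r - k) with hL
  have hinj : Set.InjOn (fun k => m - r - k) (Finset.range (t + 1)) := by
    intro a ha b hb hab
    simp only [Finset.coe_insert, Finset.mem_coe, Finset.mem_range] at ha hb
    simp only at hab
    omega
  have hcardL : L.card = t + 1 := by
    rw [hL, Finset.card_image_of_injOn hinj, Finset.card_range]
  have hlow : ∀ l ∈ L,
      2 ≤ Multiset.card ((compMS s - compMS v).filter (fun q => q.1 + q.2 = l)) := by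
    intro l hl
    rw [hL, Finset.mem_image] at hl
    obtain ⟨k, hk, rfl⟩ := hl
    rw [Finset.mem_range] at hk
    have hk' : k ≤ t := by omega
    have hl1 : 1 ≤ m - r - k := by omega
    have hlm : m - r - k ≤ m := by omega
    rw [filter_sub, filter_compMS s _ hl1 (by omega : m - r - k ≤ s.length),
      filter_compMS v _ hl1 (by omega : m - r - k ≤ v.length)]
    apply two_le_card_sub (l := m - r - k)
    · rw [SRTproof.card_compLen, SRTproof.card_compLen, hls, hlv]
    · exact SRTproof.sum_snd_compLen (t := t) hm hls hlv hσ hl1 hlm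
    · exact SRTproof.mem_compLen_len s (by omega)
    · exact SRTproof.mem_compLen_len v (by omega)
    · exact hdiff k hk'
  have hsum := sum_filter_card_le (fun q : ℕ × ℕ => q.1 + q.2) (compMS s - compMS v) L
  have hge : L.card • 2 ≤ ∑ l ∈ L,
      Multiset.card ((compMS s - compMS v).filter (fun q => q.1 + q.2 = l)) :=
    Finset.card_nsmul_le_sum L _ 2 hlow
  rw [hcardL, smul_eq_mul] at hge
  omega


/-- Let `m` be even and `t ≥ 1`. For distinct `s, v ∈ S_R^(t)(m)` with
the same sequence `(σ_1,…,σ_{m/2})`, no multiset `D` is simultaneously the result of at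
most `t` asymmetric composition errors in `C(s)` and in `C(v)`. -/
theorem SRt_corrects_asymmetric_errors (m t : ℕ) (hm : Even m) (ht : 1 ≤ t)
    (s v : List Bool) (hs : s ∈ SRt t m) (hv : v ∈ SRt t m) (hne : s ≠ v)
    (hσ : ∀ i, 1 ≤ i → i ≤ m / 2 → sigmaSeq s i = sigmaSeq v i) :
    ¬ ∃ D : Multiset (ℕ × ℕ), AsymErr t m s D ∧ AsymErr t m v D :=
  SRt_corrects_asymmetric_errors' m t hm ht s v hs hv hne hσ
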